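/- Any binary doubly even [36,7] code with minimum weight at least 16 whose dual has minimum weight at least 4 must contain the all-one vector. -/

import Mathlib

open scoped Classical
open Finset

set_option maxRecDepth 10000

/-- Hamming weight of a vector over `ZMod 2`. -/
noncomputable def wt (c : Fin 36 → ZMod 2) : ℕ :=
  (Finset.univ.filter fun i => c i ≠ 0).card

noncomputable def Ind (a : ZMod 2) : ℤ := if a = 1 then 1 else 0

lemma ind_sq (a : ZMod 2) : Ind a * Ind a = Ind a := by
  fin_cases a <;> simp [Ind]

lemma ind_pair (a b : ZMod 2) : 2 * (Ind a * Ind b) = Ind a + Ind b - Ind (a + b) := by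
  rcases (by decide : ∀ a : ZMod 2, a = 0 ∨ a = 1) a with rfl | rfl <;>
    rcases (by decide : ∀ a : ZMod 2, a = 0 ∨ a = 1) b with rfl | rfl <;>
    simp [Ind, show (1 : ZMod 2) + 1 = 0 from rfl]

lemma ind_triple (a b d : ZMod 2) : 4 * (Ind a * Ind b * Ind d) =
    Ind a + Ind b + Ind d - Ind (a+b) - Ind (a+d) - Ind (b+d) + Ind (a+b+d) := by
  rcases (by decide : ∀ a : ZMod 2, a = 0 ∨ a = 1) a with rfl | rfl <;>
    rcases (by decide : ∀ a : ZMod 2, a = 0 ∨ a = 1) b with rfl | rfl <;>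
    rcases (by decide : ∀ a : ZMod 2, a = 0 ∨ a = 1) d with rfl | rfl <;>
    simp [Ind, show (1 : ZMod 2) + 1 = 0 from rfl]

lemma ind_aba (a b : ZMod 2) : Ind a * Ind b * Ind a = Ind a * Ind b := by
  rcases (by decide : ∀ a : ZMod 2, a = 0 ∨ a = 1) a with rfl | rfl <;>
    rcases (by decide : ∀ a : ZMod 2, a = 0 ∨ a = 1) b with rfl | rfl <;> simp [Ind]

lemma sum_ite_one (i : Fin 36) (a b : ℤ) :
    ∑ j : Fin 36, (if i = j then a else b) = a + 35 * b := by
  have h : ∀ j : Fin 36, (if i = j then a else b) = b + (if i = j then a - b else 0) := by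
    intro j
    by_cases hj : i = j <;> simp [hj]
  rw [Finset.sum_congr rfl (fun j _ => h j), Finset.sum_add_distrib,
    Finset.sum_ite_eq Finset.univ i (fun _ => a - b)]
  simp
  ring

lemma sum_ite_two (i j : Fin 36) (hij : i ≠ j) (a b c : ℤ) :
    ∑ k : Fin 36, (if i = k then a else if j = k then b else c) = a + b + 34 * c := by
  have h : ∀ k : Fin 36, (if i = k then a else if j = k then b else c)
      = c + ((if i = k then a - c else 0) + (if j = k then b - c else 0)) := by
    intro k
    by_cases h1 : i = k
    · subst h1
      simp [(Ne.symm hij : j ≠ i)]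
    · by_cases h2 : j = k
      · subst h2
        simp [h1]
      · simp [h1, h2]
  rw [Finset.sum_congr rfl (fun k _ => h k), Finset.sum_add_distrib,
    Finset.sum_add_distrib, Finset.sum_ite_eq Finset.univ i (fun _ => a - c),
    Finset.sum_ite_eq Finset.univ j (fun _ => b - c)]
  simp
  ring

lemma half (B : Submodule (ZMod 2) (Fin 36 → ZMod 2))
    (hcard : (Finset.univ.filter fun c => c ∈ B).card = 128)
    (x : Fin 36 → ZMod 2) (hx : x ≠ 0) (hwt : wt x ≤ 3)
    (hdual : ∀ y : Fin 36 → ZMod 2,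
      (∀ c ∈ B, ∑ i, y i * c i = 0) → y ≠ 0 → 4 ≤ wt y) :
    ((Finset.univ.filter fun c => c ∈ B).filter
      (fun c => ∑ i, x i * c i = 1)).card = 64 := by
  set S := Finset.univ.filter fun c : Fin 36 → ZMod 2 => c ∈ B with hS
  have hex : ∃ c0 ∈ B, ∑ i, x i * c0 i = 1 := by
    by_contra h
    push_neg at h
    have h0 : ∀ c ∈ B, ∑ i, x i * c i = 0 := by
      intro c hc
      have := h c hc
      rcases (by decide : ∀ a : ZMod 2, a = 0 ∨ a = 1) (∑ i, x i * c i) with h' | h'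
      · exact h'
      · exact absurd h' this
    exact absurd (hdual x h0 hx) (by omega)
  obtain ⟨c0, hc0B, hc0⟩ := hex
  have hadd : ∀ c : Fin 36 → ZMod 2, c + c0 + c0 = c := by
    intro c; funext i
    simp [add_assoc, CharTwo.add_self_eq_zero]
  have hdot : ∀ c : Fin 36 → ZMod 2,
      ∑ i, x i * (c + c0) i = (∑ i, x i * c i) + 1 := by
    intro c
    have h2 : ∑ i, x i * (c + c0) i = (∑ i, x i * c i) + ∑ i, x i * c0 i := by
      rw [← Finset.sum_add_distrib]
      apply Finset.sum_congr rfl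
      intro i _
      simp [mul_add]
    rw [h2, hc0]
  have hkey : (S.filter (fun c => ∑ i, x i * c i = 1)).card
      = (S.filter (fun c => ∑ i, x i * c i = 0)).card := by
    apply Finset.card_nbij' (i := fun c => c + c0) (j := fun c => c + c0)
    · intro c hc
      rw [hS] at hc ⊢
      simp only [Finset.mem_coe, Finset.mem_filter, Finset.mem_univ, true_and] at hc ⊢
      refine ⟨B.add_mem hc.1 hc0B, ?_⟩
      rw [hdot, hc.2]; decide
    · intro c hc
      rw [hS] at hc ⊢
      simp only [Finset.mem_coe, Finset.mem_filter, Finset.mem_univ, true_and] at hc ⊢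
      refine ⟨B.add_mem hc.1 hc0B, ?_⟩
      rw [hdot, hc.2]; decide
    · intro c _; exact hadd c
    · intro c _; exact hadd c
  have hsplit : (S.filter (fun c => ∑ i, x i * c i = 0)).card
      + (S.filter (fun c => ∑ i, x i * c i = 1)).card = 128 := by
    rw [← hcard]
    have : (S.filter (fun c => ∑ i, x i * c i = 1))
        = (S.filter (fun c => ¬ (∑ i, x i * c i = 0))) := by
      apply Finset.filter_congr
      intro c _
      rcases (by decide : ∀ a : ZMod 2, a = 0 ∨ a = 1) (∑ i, x i * c i) with h' | h' <;>
        simp [h']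
    rw [this]
    exact Finset.card_filter_add_card_filter_not _
  set a := (S.filter (fun c => ∑ i, x i * c i = 1)).card with ha
  set b := (S.filter (fun c => ∑ i, x i * c i = 0)).card with hb
  clear_value a b
  clear * - hkey hsplit
  omega

theorem stmt1 (B : Submodule (ZMod 2) (Fin 36 → ZMod 2))
    (hdim : Module.finrank (ZMod 2) B = 7)
    (hde : ∀ c ∈ B, 4 ∣ wt c)
    (hmin : ∀ c ∈ B, c ≠ 0 → 16 ≤ wt c)
    (hdual : ∀ x : Fin 36 → ZMod 2,
      (∀ c ∈ B, ∑ i, x i * c i = 0) → x ≠ 0 → 4 ≤ wt x) :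
    (fun _ : Fin 36 => (1 : ZMod 2)) ∈ B := by
  by_contra hone
  set S := Finset.univ.filter fun c : Fin 36 → ZMod 2 => c ∈ B with hS
  have hcard : S.card = 128 := by
    have h1 : Fintype.card B = 128 := by
      rw [Module.card_eq_pow_finrank (K := ZMod 2) (V := B), hdim]
      norm_num [ZMod.card]
    rw [← h1]
    exact (Fintype.card_subtype _).symm
  -- single coordinate counts
  have cnt1 : ∀ i : Fin 36, ∑ c ∈ S, Ind (c i) = 64 := by
    intro i
    have hx : (fun t : Fin 36 => if t = i then (1 : ZMod 2) else 0) ≠ 0 := by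
      intro h
      have := congrFun h i
      simp at this
    have hw : wt (fun t : Fin 36 => if t = i then (1 : ZMod 2) else 0) ≤ 3 := by
      have : (Finset.univ.filter fun t : Fin 36 =>
          (if t = i then (1 : ZMod 2) else 0) ≠ 0) = {i} := by
        ext t
        by_cases h : t = i <;> simp [h]
      rw [wt, this]
      simp
    have h64 := half B hcard _ hx hw hdual
    have hdotsimp : ∀ c : Fin 36 → ZMod 2,
        (∑ t, (if t = i then (1 : ZMod 2) else 0) * c t) = c i := by
      intro c
      rw [Finset.sum_congr rfl (fun t _ => by rw [ite_mul, one_mul, zero_mul])]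
      simp
    have heq : (S.filter fun c => c i = 1)
        = (S.filter fun c => ∑ t, (if t = i then (1 : ZMod 2) else 0) * c t = 1) := by
      apply Finset.filter_congr
      intro c _
      rw [hdotsimp c]
    calc ∑ c ∈ S, Ind (c i) = ((S.filter fun c => c i = 1).card : ℤ) := by
          simp [Ind, Finset.sum_boole]
      _ = 64 := by rw [heq]; exact_mod_cast h64
  -- pair xor counts
  have cnt2 : ∀ i j : Fin 36, i ≠ j → ∑ c ∈ S, Ind (c i + c j) = 64 := by
    intro i j hij
    set x : Fin 36 → ZMod 2 :=
      fun t => (if t = i then (1:ZMod 2) else 0) + (if t = j then (1:ZMod 2) else 0) with hxdef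
    have hx : x ≠ 0 := by
      intro h
      have := congrFun h i
      simp [hxdef, hij] at this
    have hw : wt x ≤ 3 := by
      have : (Finset.univ.filter fun t : Fin 36 => x t ≠ 0) ⊆ {i, j} := by
        intro t ht
        simp only [Finset.mem_filter, Finset.mem_univ, true_and, hxdef] at ht
        by_contra hmem
        simp only [Finset.mem_insert, Finset.mem_singleton] at hmem
        push_neg at hmem
        simp [hmem.1, hmem.2] at ht
      calc wt x ≤ ({i, j} : Finset (Fin 36)).card := Finset.card_le_card this
        _ ≤ 2 := Finset.card_insert_le _ _ |>.trans (by simp)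
        _ ≤ 3 := by omega
    have hdotsimp : ∀ c : Fin 36 → ZMod 2, (∑ t, x t * c t) = c i + c j := by
      intro c
      have : ∀ t, x t * c t = (if t = i then c t else 0) + (if t = j then c t else 0) := by
        intro t
        rw [hxdef]
        by_cases h1 : t = i
        · subst h1
          simp [hij]
        · by_cases h2 : t = j
          · subst h2
            simp [Ne.symm hij]
          · simp [h1, h2]
      rw [Finset.sum_congr rfl (fun t _ => this t), Finset.sum_add_distrib]
      simp
    have h64 := half B hcard x hx hw hdual
    have heq : (S.filter fun c => c i + c j = 1)
        = (S.filter fun c => ∑ t, x t * c t = 1) := by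
      apply Finset.filter_congr
      intro c _
      rw [hdotsimp c]
    calc ∑ c ∈ S, Ind (c i + c j)
        = ((S.filter fun c => c i + c j = 1).card : ℤ) := by
          simp [Ind, Finset.sum_boole]
      _ = 64 := by rw [heq]; exact_mod_cast h64
  -- triple xor counts
  have cnt3 : ∀ i j k : Fin 36, i ≠ j → i ≠ k → j ≠ k →
      ∑ c ∈ S, Ind (c i + c j + c k) = 64 := by
    intro i j k hij hik hjk
    set x : Fin 36 → ZMod 2 :=
      fun t => (if t = i then (1:ZMod 2) else 0) + (if t = j then (1:ZMod 2) else 0)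
        + (if t = k then (1:ZMod 2) else 0) with hxdef
    have hx : x ≠ 0 := by
      intro h
      have := congrFun h i
      simp [hxdef, hij, hik] at this
    have hw : wt x ≤ 3 := by
      have : (Finset.univ.filter fun t : Fin 36 => x t ≠ 0) ⊆ {i, j, k} := by
        intro t ht
        simp only [Finset.mem_filter, Finset.mem_univ, true_and, hxdef] at ht
        by_contra hmem
        simp only [Finset.mem_insert, Finset.mem_singleton] at hmem
        push_neg at hmem
        simp [hmem.1, hmem.2.1, hmem.2.2] at ht
      calc wt x ≤ ({i, j, k} : Finset (Fin 36)).card := Finset.card_le_card this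
        _ ≤ 3 := by
            apply (Finset.card_insert_le _ _).trans
            have := Finset.card_insert_le j ({k} : Finset (Fin 36))
            simp at this ⊢
            omega
    have hdotsimp : ∀ c : Fin 36 → ZMod 2, (∑ t, x t * c t) = c i + c j + c k := by
      intro c
      have : ∀ t, x t * c t = ((if t = i then c t else 0) + (if t = j then c t else 0))
          + (if t = k then c t else 0) := by
        intro t
        rw [hxdef]
        by_cases h1 : t = i
        · subst h1
          simp [hij, hik]
        · by_cases h2 : t = j
          · subst h2
            simp [Ne.symm hij, hjk]
          · by_cases h3 : t = k
            · subst h3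
              simp [Ne.symm hik, Ne.symm hjk]
            · simp [h1, h2, h3]
      rw [Finset.sum_congr rfl (fun t _ => this t), Finset.sum_add_distrib,
        Finset.sum_add_distrib]
      simp
    have h64 := half B hcard x hx hw hdual
    have heq : (S.filter fun c => c i + c j + c k = 1)
        = (S.filter fun c => ∑ t, x t * c t = 1) := by
      apply Finset.filter_congr
      intro c _
      rw [hdotsimp c]
    calc ∑ c ∈ S, Ind (c i + c j + c k)
        = ((S.filter fun c => c i + c j + c k = 1).card : ℤ) := by
          simp [Ind, Finset.sum_boole]
      _ = 64 := by rw [heq]; exact_mod_cast h64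
  -- pair product
  have pairP : ∀ i j : Fin 36, ∑ c ∈ S, Ind (c i) * Ind (c j)
      = if i = j then 64 else 32 := by
    intro i j
    by_cases h : i = j
    · subst h
      rw [if_pos rfl, Finset.sum_congr rfl (fun c _ => ind_sq (c i))]
      exact cnt1 i
    · rw [if_neg h]
      have h2 : ∑ c ∈ S, 2 * (Ind (c i) * Ind (c j))
          = (∑ c ∈ S, Ind (c i)) + (∑ c ∈ S, Ind (c j)) - ∑ c ∈ S, Ind (c i + c j) := by
        rw [Finset.sum_congr rfl (fun c _ => ind_pair (c i) (c j)),
          Finset.sum_sub_distrib, Finset.sum_add_distrib]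
      rw [← Finset.mul_sum] at h2
      rw [cnt1 i, cnt1 j, cnt2 i j h] at h2
      linarith
  -- triple product
  have tripleP : ∀ i j k : Fin 36, i ≠ j → i ≠ k → j ≠ k →
      ∑ c ∈ S, Ind (c i) * Ind (c j) * Ind (c k) = 16 := by
    intro i j k hij hik hjk
    have h2 : ∑ c ∈ S, 4 * (Ind (c i) * Ind (c j) * Ind (c k))
        = (∑ c ∈ S, Ind (c i)) + (∑ c ∈ S, Ind (c j)) + (∑ c ∈ S, Ind (c k))
          - (∑ c ∈ S, Ind (c i + c j)) - (∑ c ∈ S, Ind (c i + c k))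
          - (∑ c ∈ S, Ind (c j + c k)) + ∑ c ∈ S, Ind (c i + c j + c k) := by
      rw [Finset.sum_congr rfl (fun c _ => ind_triple (c i) (c j) (c k)),
        Finset.sum_add_distrib, Finset.sum_sub_distrib, Finset.sum_sub_distrib,
        Finset.sum_sub_distrib, Finset.sum_add_distrib, Finset.sum_add_distrib]
    rw [← Finset.mul_sum] at h2
    rw [cnt1 i, cnt1 j, cnt1 k, cnt2 i j hij, cnt2 i k hik, cnt2 j k hjk,
      cnt3 i j k hij hik hjk] at h2
    linarith
  -- triple product, general indices
  have tripleP' : ∀ i j k : Fin 36, ∑ c ∈ S, Ind (c i) * Ind (c j) * Ind (c k)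
      = if i = j then (if i = k then 64 else 32)
        else if i = k then 32 else if j = k then 32 else 16 := by
    intro i j k
    by_cases hij : i = j
    · subst hij
      rw [if_pos rfl]
      by_cases hik : i = k
      · subst hik
        rw [if_pos rfl,
          Finset.sum_congr rfl (fun c _ => by rw [ind_sq (c i), ind_sq (c i)])]
        exact cnt1 i
      · rw [if_neg hik,
          Finset.sum_congr rfl (fun c _ => by rw [ind_sq (c i)])]
        have := pairP i k
        rw [if_neg hik] at this
        exact this
    · rw [if_neg hij]
      by_cases hik : i = k
      · subst hik
        rw [if_pos rfl,
          Finset.sum_congr rfl (fun c _ => ind_aba (c i) (c j))]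
        have := pairP i j
        rw [if_neg hij] at this
        exact this
      · rw [if_neg hik]
        by_cases hjk : j = k
        · subst hjk
          rw [if_pos rfl,
            Finset.sum_congr rfl (fun c _ => by rw [mul_assoc, ind_sq (c j)])]
          have := pairP i j
          rw [if_neg hij] at this
          exact this
        · rw [if_neg hjk]
          exact tripleP i j k hij hik hjk
  -- the integer weight
  have wtZ : ∀ c : Fin 36 → ZMod 2, (wt c : ℤ) = ∑ i, Ind (c i) := by
    intro c
    have hiff : ∀ a : ZMod 2, a ≠ 0 ↔ a = 1 := by decide
    rw [wt]
    rw [show (Finset.univ.filter fun i => c i ≠ 0)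
        = (Finset.univ.filter fun i => c i = 1) from
      Finset.filter_congr (fun i _ => hiff (c i))]
    simp [Ind, Finset.sum_boole]
  -- moments
  have M1 : ∑ c ∈ S, (wt c : ℤ) = 2304 := by
    rw [Finset.sum_congr rfl (fun c _ => wtZ c), Finset.sum_comm]
    rw [Finset.sum_congr rfl (fun i _ => cnt1 i)]
    simp
  have M2 : ∑ c ∈ S, (wt c : ℤ) ^ 2 = 42624 := by
    have expand : ∀ c : Fin 36 → ZMod 2, (wt c : ℤ) ^ 2
        = ∑ i, ∑ j, Ind (c i) * Ind (c j) := by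
      intro c
      rw [wtZ c, sq, Finset.sum_mul_sum]
    rw [Finset.sum_congr rfl (fun c _ => expand c), Finset.sum_comm]
    rw [Finset.sum_congr rfl (fun i _ => Finset.sum_comm)]
    rw [Finset.sum_congr rfl (fun i _ => Finset.sum_congr rfl (fun j _ => pairP i j))]
    rw [Finset.sum_congr rfl (fun i _ => sum_ite_one i 64 32)]
    simp
  have M3 : ∑ c ∈ S, (wt c : ℤ) ^ 3 = 808704 := by
    have expand : ∀ c : Fin 36 → ZMod 2, (wt c : ℤ) ^ 3
        = ∑ i, ∑ j, ∑ k, Ind (c i) * Ind (c j) * Ind (c k) := by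
      intro c
      rw [wtZ c, pow_succ, sq, Finset.sum_mul_sum, Finset.sum_mul]
      apply Finset.sum_congr rfl
      intro i _
      rw [Finset.sum_mul]
      apply Finset.sum_congr rfl
      intro j _
      rw [Finset.mul_sum]
    rw [Finset.sum_congr rfl (fun c _ => expand c), Finset.sum_comm]
    rw [Finset.sum_congr rfl (fun i _ => Finset.sum_comm)]
    rw [Finset.sum_congr rfl (fun i _ => Finset.sum_congr rfl
      (fun j _ => Finset.sum_comm))]
    rw [Finset.sum_congr rfl (fun i _ => Finset.sum_congr rfl (fun j _ =>
      Finset.sum_congr rfl (fun k _ => tripleP' i j k)))]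
    have inner : ∀ i j : Fin 36, (∑ k, if i = j then (if i = k then (64:ℤ) else 32)
        else if i = k then 32 else if j = k then 32 else 16)
        = if i = j then 1184 else 608 := by
      intro i j
      by_cases hij : i = j
      · subst hij
        rw [if_pos rfl]
        rw [show (∑ k, if i = i then (if i = k then (64:ℤ) else 32)
            else if i = k then 32 else if i = k then 32 else 16)
            = ∑ k, (if i = k then (64:ℤ) else 32) from
          Finset.sum_congr rfl (fun k _ => by rw [if_pos rfl])]
        rw [sum_ite_one i 64 32]
        norm_num
      · simp only [if_neg hij]
        rw [sum_ite_two i j hij 32 32 16]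
        norm_num
    rw [Finset.sum_congr rfl (fun i _ => Finset.sum_congr rfl (fun j _ => inner i j))]
    rw [Finset.sum_congr rfl (fun i _ => sum_ite_one i 1184 608)]
    simp
  -- no weight 36 codeword
  have no36 : ∀ c ∈ S, wt c ≠ 36 := by
    intro c hc h36
    rw [hS, Finset.mem_filter] at hc
    have huniv : (Finset.univ.filter fun i => c i ≠ 0) = Finset.univ :=
      Finset.eq_univ_of_card _ (by rw [← wt.eq_def c, h36]; simp)
    have hall : ∀ i, c i = 1 := by
      intro i
      have : i ∈ Finset.univ.filter fun i => c i ≠ 0 := by rw [huniv]; simp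
      rw [Finset.mem_filter] at this
      rcases (by decide : ∀ a : ZMod 2, a = 0 ∨ a = 1) (c i) with h | h
      · exact absurd h this.2
      · exact h
    have : c = fun _ : Fin 36 => (1 : ZMod 2) := funext hall
    rw [this] at hc
    exact hone hc.2
  -- bounds on weights
  have hwle : ∀ c : Fin 36 → ZMod 2, wt c ≤ 36 := by
    intro c
    rw [wt]
    calc (Finset.univ.filter fun i => c i ≠ 0).card ≤ (Finset.univ : Finset (Fin 36)).card :=
        Finset.card_le_univ _
      _ = 36 := by simp
  -- certificate: h(w) = -(w-16)(w-20)(w-32) ≥ 0 on allowed weights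
  have hterm : ∀ c ∈ S, (0:ℤ) ≤ -((wt c : ℤ) - 16) * ((wt c : ℤ) - 20) * ((wt c : ℤ) - 32) := by
    intro c hc
    rw [hS, Finset.mem_filter] at hc
    obtain ⟨m, hm⟩ := hde c hc.2
    have hle : wt c ≤ 36 := hwle c
    have h36 : wt c ≠ 36 := no36 c (by rw [hS, Finset.mem_filter]; exact hc)
    by_cases hc0 : c = 0
    · have : wt c = 0 := by
        rw [hc0, wt]
        simp
      rw [this]
      norm_num
    · have h16 := hmin c hc.2 hc0
      have : m = 4 ∨ m = 5 ∨ m = 6 ∨ m = 7 ∨ m = 8 := by omega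
      rcases this with h | h | h | h | h <;> subst h <;> rw [hm] <;> norm_num
  have hzero : (0 : Fin 36 → ZMod 2) ∈ S := by
    rw [hS, Finset.mem_filter]
    exact ⟨Finset.mem_univ _, B.zero_mem⟩
  have hwt0 : wt (0 : Fin 36 → ZMod 2) = 0 := by
    rw [wt]
    simp
  -- sum of the certificate
  have hsum : ∑ c ∈ S, (-((wt c : ℤ) - 16) * ((wt c : ℤ) - 20) * ((wt c : ℤ) - 32))
      = 8960 := by
    have expand : ∀ c ∈ S, -((wt c : ℤ) - 16) * ((wt c : ℤ) - 20) * ((wt c : ℤ) - 32)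
        = -(wt c : ℤ)^3 + 68 * (wt c : ℤ)^2 - 1472 * (wt c : ℤ) + 10240 := by
      intro c _
      ring
    rw [Finset.sum_congr rfl expand]
    rw [Finset.sum_add_distrib, Finset.sum_sub_distrib, Finset.sum_add_distrib,
      Finset.sum_neg_distrib, ← Finset.mul_sum, ← Finset.mul_sum, M1, M2, M3]
    rw [Finset.sum_const, hcard]
    norm_num
  -- contradiction
  have hge : (10240 : ℤ) ≤ ∑ c ∈ S, (-((wt c : ℤ) - 16) * ((wt c : ℤ) - 20) * ((wt c : ℤ) - 32)) := by
    have h1 := Finset.single_le_sum (f := fun c : Fin 36 → ZMod 2 =>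
      -((wt c : ℤ) - 16) * ((wt c : ℤ) - 20) * ((wt c : ℤ) - 32)) hterm hzero
    refine le_trans ?_ h1
    show (10240:ℤ) ≤ -((wt (0 : Fin 36 → ZMod 2) : ℤ) - 16) *
      ((wt (0 : Fin 36 → ZMod 2) : ℤ) - 20) * ((wt (0 : Fin 36 → ZMod 2) : ℤ) - 32)
    rw [hwt0]
    norm_num
  rw [hsum] at hge
  norm_num at hge
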